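/- Let 0 < ε ≤ 1/2, let λ, λ′, λ̃ > 0 with λ ≤ λ′ and λ′/4 ≤ λ̃ ≤ λ′, and let M and M̃ be symmetric positive semidefinite n×n real matrices satisfying (1−ε)(M+λI) ⪯ M̃+λI ⪯ (1+ε)(M+λI) in the Loewner order. Then for every row vector a ∈ ℝ^{1×n}: ((1−ε)/4)·(M + aᵀa + λ′I) ⪯ M̃ + aᵀa + λ̃I ⪯ (1+ε)·(M + aᵀa + λ′I), and consequently for every row vector v ∈ ℝ^{1×n}: (1/2)·v(M + aᵀa + λ′I)^{−1}vᵀ ≤ v(M̃ + aᵀa + λ̃I)^{−1}vᵀ ≤ 8·v(M + aᵀa + λ′I)^{−1}vᵀ. -/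

import Mathlib

open Matrix

section aux
variable {n : ℕ}

lemma myquad_nonneg {X : Matrix (Fin n) (Fin n) ℝ} (hX : X.PosSemidef) (v : Fin n → ℝ) :
    0 ≤ v ⬝ᵥ X *ᵥ v := by simpa using hX.dotProduct_mulVec_nonneg v

lemma mypsd_of_quad {X : Matrix (Fin n) (Fin n) ℝ} (hX : Xᴴ = X)
    (h : ∀ v, 0 ≤ v ⬝ᵥ X *ᵥ v) : X.PosSemidef := Matrix.PosSemidef.of_dotProduct_mulVec_nonneg hX (fun x => by simpa using h x)

lemma myvecMulVec_mulVec (a v : Fin n → ℝ) : vecMulVec a a *ᵥ v = (a ⬝ᵥ v) • a := by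
  ext i
  simp [vecMulVec_apply, mulVec, dotProduct, Finset.mul_sum, mul_comm, mul_assoc, mul_left_comm]

lemma myvecMulVec_herm (a : Fin n → ℝ) : (vecMulVec a a)ᴴ = vecMulVec a a := by
  ext i j
  simp [conjTranspose_apply, vecMulVec_apply, mul_comm]

lemma myvecMulVec_psd (a : Fin n → ℝ) : (vecMulVec a a).PosSemidef := by
  refine mypsd_of_quad (myvecMulVec_herm a) fun v => ?_
  rw [myvecMulVec_mulVec, dotProduct_smul, smul_eq_mul, dotProduct_comm]
  exact mul_self_nonneg _

lemma mysmul_posdef {c : ℝ} (hc : 0 < c) {X : Matrix (Fin n) (Fin n) ℝ} (hX : X.PosDef) :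
    (c • X).PosDef := by
  refine Matrix.PosDef.of_dotProduct_mulVec_pos ?_ fun x hx => ?_
  · show _ = _
    rw [conjTranspose_smul, hX.1]; simp
  · rw [smul_mulVec, dotProduct_smul, smul_eq_mul]
    exact mul_pos hc (hX.dotProduct_mulVec_pos hx)

lemma mysmul_one_posdef {c : ℝ} (hc : 0 < c) : ((c • 1 : Matrix (Fin n) (Fin n) ℝ)).PosDef :=
  mysmul_posdef hc Matrix.PosDef.one

/-- Cauchy–Schwarz for a PSD bilinear form. -/
lemma mypsd_cs {X : Matrix (Fin n) (Fin n) ℝ} (hX : X.PosSemidef) (u w : Fin n → ℝ) :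
    (u ⬝ᵥ X *ᵥ w) ^ 2 ≤ (u ⬝ᵥ X *ᵥ u) * (w ⬝ᵥ X *ᵥ w) := by
  have hsymm : w ⬝ᵥ X *ᵥ u = u ⬝ᵥ X *ᵥ w := by
    have hXt : Xᵀ = X := by
      rw [← conjTranspose_eq_transpose_of_trivial]; exact hX.1.eq
    rw [dotProduct_mulVec, ← mulVec_transpose, hXt, dotProduct_comm]
  have key : ∀ t : ℝ, 0 ≤ (w ⬝ᵥ X *ᵥ w) * (t * t) + (2 * (u ⬝ᵥ X *ᵥ w)) * t + u ⬝ᵥ X *ᵥ u := by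
    intro t
    have h0 := myquad_nonneg hX (u + t • w)
    simp only [add_mulVec, mulVec_add, mulVec_smul, smul_mulVec, dotProduct_add,
      add_dotProduct, dotProduct_smul, smul_dotProduct, smul_eq_mul] at h0
    rw [hsymm] at h0
    nlinarith [h0]
  have hd := discrim_le_zero key
  rw [discrim] at hd
  nlinarith [hd]

/-- Loewner-antitonicity of the inverse on quadratic forms, with a scale. -/
lemma myinv_quad_le {c : ℝ} (hc : 0 < c) {X Y : Matrix (Fin n) (Fin n) ℝ}
    (hX : X.PosDef) (hY : Y.PosDef) (hXY : (Y - c • X).PosSemidef) (v : Fin n → ℝ) :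
    v ⬝ᵥ Y⁻¹ *ᵥ v ≤ c⁻¹ * (v ⬝ᵥ X⁻¹ *ᵥ v) := by
  -- first handle plain version with X' = c • X
  have hX' : (c • X).PosDef := mysmul_posdef hc hX
  letI := invertibleOfNonzero hc.ne'
  have hXdet : IsUnit X.det := isUnit_iff_ne_zero.2 hX.det_pos.ne'
  have hsmul_inv : (c • X)⁻¹ = c⁻¹ • X⁻¹ := by
    rw [X.inv_smul c hXdet, invOf_eq_inv]
  -- main argument with X' := c • X
  set X' := c • X with hX'def
  have hX'det : IsUnit X'.det := isUnit_iff_ne_zero.2 hX'.det_pos.ne'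
  have hYdet : IsUnit Y.det := isUnit_iff_ne_zero.2 hY.det_pos.ne'
  set u := Y⁻¹ *ᵥ v with hu
  set w := X'⁻¹ *ᵥ v with hw
  have hXv : X' *ᵥ w = v := by
    rw [hw, mulVec_mulVec, mul_nonsing_inv _ hX'det, one_mulVec]
  have hYv : Y *ᵥ u = v := by
    rw [hu, mulVec_mulVec, mul_nonsing_inv _ hYdet, one_mulVec]
  set q := v ⬝ᵥ Y⁻¹ *ᵥ v with hq
  set r := v ⬝ᵥ X'⁻¹ *ᵥ v with hr
  have huv : u ⬝ᵥ v = q := by rw [hu, hq, dotProduct_comm]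
  have hwv : w ⬝ᵥ v = r := by rw [hw, hr, dotProduct_comm]
  have huXw : u ⬝ᵥ X' *ᵥ w = q := by rw [hXv, huv]
  have hwXw : w ⬝ᵥ X' *ᵥ w = r := by rw [hXv, hwv]
  have huYu : u ⬝ᵥ Y *ᵥ u = q := by rw [hYv, huv]
  have huXu_le : u ⬝ᵥ X' *ᵥ u ≤ q := by
    have h0 := myquad_nonneg hXY u
    simp only [sub_mulVec, dotProduct_sub] at h0
    linarith [huYu, h0]
  have huXu_nn : 0 ≤ u ⬝ᵥ X' *ᵥ u := myquad_nonneg hX'.posSemidef u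
  have hq_nn : 0 ≤ q := by rw [hq]; exact myquad_nonneg hY.inv.posSemidef v
  have hr_nn : 0 ≤ r := by rw [hr]; exact myquad_nonneg hX'.inv.posSemidef v
  have hcs := mypsd_cs hX'.posSemidef u w
  rw [huXw, hwXw] at hcs
  have hqr : q ^ 2 ≤ q * r := by nlinarith [hcs, huXu_le, huXu_nn, hr_nn]
  have hq_le_r : q ≤ r := by nlinarith [hqr, hq_nn, hr_nn]
  have : r = c⁻¹ * (v ⬝ᵥ X⁻¹ *ᵥ v) := by
    rw [hr, hX'def, hsmul_inv, smul_mulVec, dotProduct_smul, smul_eq_mul]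
  rw [hq] at hq_le_r
  linarith [hq_le_r, this ▸ hq_le_r]

end aux

lemma mysmul_psd {n : ℕ} {c : ℝ} (hc : 0 ≤ c) {X : Matrix (Fin n) (Fin n) ℝ}
    (hX : X.PosSemidef) : (c • X).PosSemidef := by
  refine mypsd_of_quad ?_ fun v => ?_
  · rw [conjTranspose_smul, hX.1.eq]; simp
  · rw [smul_mulVec, dotProduct_smul, smul_eq_mul]
    exact mul_nonneg hc (myquad_nonneg hX v)

lemma myquad_vmv {n : ℕ} (a v : Fin n → ℝ) :
    v ⬝ᵥ vecMulVec a a *ᵥ v = (a ⬝ᵥ v) ^ 2 := by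
  rw [myvecMulVec_mulVec, dotProduct_smul, smul_eq_mul, dotProduct_comm]; ring

/-- **Invariant for online low-rank approximation.**
If `(1-ε)(M+λI) ⪯ M̃+λI ⪯ (1+ε)(M+λI)` with `0 < ε ≤ 1/2`, `0 < λ ≤ λ'`, and
`λ'/4 ≤ λ̃ ≤ λ'`, then for every row `a`:
`((1-ε)/4)(M+aᵀa+λ'I) ⪯ M̃+aᵀa+λ̃I ⪯ (1+ε)(M+aᵀa+λ'I)`, and consequently the
corresponding inverse quadratic forms agree up to factors `1/2` and `8`. -/
theorem online_lowrank_invariant (n : ℕ) (ε lam lam' lamt : ℝ)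
    (hε0 : 0 < ε) (hε : ε ≤ 1 / 2)
    (hlam : 0 < lam) (hlam' : 0 < lam') (hlamt : 0 < lamt)
    (hle : lam ≤ lam') (hlow : lam' / 4 ≤ lamt) (hhigh : lamt ≤ lam')
    (M Mt : Matrix (Fin n) (Fin n) ℝ) (hM : M.PosSemidef) (hMt : Mt.PosSemidef)
    (h1 : ((Mt + lam • 1) - (1 - ε) • (M + lam • 1)).PosSemidef)
    (h2 : ((1 + ε) • (M + lam • 1) - (Mt + lam • 1)).PosSemidef) :
    ∀ a : Fin n → ℝ,
      ((Mt + vecMulVec a a + lamt • 1)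
        - ((1 - ε) / 4) • (M + vecMulVec a a + lam' • 1)).PosSemidef ∧
      ((1 + ε) • (M + vecMulVec a a + lam' • 1)
        - (Mt + vecMulVec a a + lamt • 1)).PosSemidef ∧
      ∀ v : Fin n → ℝ,
        (1 / 2) * (v ⬝ᵥ ((M + vecMulVec a a + lam' • 1)⁻¹ *ᵥ v)) ≤
          v ⬝ᵥ ((Mt + vecMulVec a a + lamt • 1)⁻¹ *ᵥ v) ∧
        v ⬝ᵥ ((Mt + vecMulVec a a + lamt • 1)⁻¹ *ᵥ v) ≤
          8 * (v ⬝ᵥ ((M + vecMulVec a a + lam' • 1)⁻¹ *ᵥ v)) := by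
  intro a
  have h1ε : (0:ℝ) < 1 - ε := by linarith
  set A := M + vecMulVec a a + lam' • (1 : Matrix (Fin n) (Fin n) ℝ) with hAdef
  set B := Mt + vecMulVec a a + lamt • (1 : Matrix (Fin n) (Fin n) ℝ) with hBdef
  have hMT : Mᵀ = M := by
    rw [← conjTranspose_eq_transpose_of_trivial]; exact hM.1.eq
  have hMtT : Mtᵀ = Mt := by
    rw [← conjTranspose_eq_transpose_of_trivial]; exact hMt.1.eq
  have hvT : (vecMulVec a a)ᵀ = vecMulVec a a := by
    rw [← conjTranspose_eq_transpose_of_trivial]; exact myvecMulVec_herm a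
  have hAherm : Aᴴ = A := by
    rw [hAdef]
    simp [conjTranspose_add, conjTranspose_smul, hMT, hvT]
  have hBherm : Bᴴ = B := by
    rw [hBdef]
    simp [conjTranspose_add, conjTranspose_smul, hMtT, hvT]
  have hA : A.PosDef :=
    Matrix.PosDef.posSemidef_add (hM.add (myvecMulVec_psd a)) (mysmul_one_posdef hlam')
  have hB : B.PosDef :=
    Matrix.PosDef.posSemidef_add (hMt.add (myvecMulVec_psd a)) (mysmul_one_posdef hlamt)
  -- pointwise quadratic data
  have part1 : (B - ((1 - ε) / 4) • A).PosSemidef := by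
    refine mypsd_of_quad ?_ fun v => ?_
    · rw [conjTranspose_sub, conjTranspose_smul, hAherm, hBherm]; simp
    · have hq1 := myquad_nonneg h1 v
      simp only [sub_mulVec, add_mulVec, smul_mulVec, one_mulVec, dotProduct_sub,
        dotProduct_add, dotProduct_smul, smul_eq_mul] at hq1
      have hqMt := myquad_nonneg hMt v
      have hqa : (0:ℝ) ≤ (a ⬝ᵥ v) ^ 2 := sq_nonneg _
      have hs : (0:ℝ) ≤ v ⬝ᵥ v := by simpa using dotProduct_self_star_nonneg v
      rw [hBdef, hAdef]
      simp only [sub_mulVec, add_mulVec, smul_mulVec, one_mulVec, dotProduct_sub,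
        dotProduct_add, dotProduct_smul, smul_eq_mul, myquad_vmv]
      nlinarith [hq1, hqMt, hqa, hs, mul_nonneg hε0.le hqa,
        mul_nonneg (sub_nonneg.2 hlow) hs,
        mul_nonneg (mul_nonneg hε0.le (sub_nonneg.2 hle)) hs]
  have part2 : ((1 + ε) • A - B).PosSemidef := by
    refine mypsd_of_quad ?_ fun v => ?_
    · rw [conjTranspose_sub, conjTranspose_smul, hAherm, hBherm]; simp
    · have hq2 := myquad_nonneg h2 v
      simp only [sub_mulVec, add_mulVec, smul_mulVec, one_mulVec, dotProduct_sub,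
        dotProduct_add, dotProduct_smul, smul_eq_mul] at hq2
      have hqa : (0:ℝ) ≤ (a ⬝ᵥ v) ^ 2 := sq_nonneg _
      have hs : (0:ℝ) ≤ v ⬝ᵥ v := by simpa using dotProduct_self_star_nonneg v
      rw [hBdef, hAdef]
      simp only [sub_mulVec, add_mulVec, smul_mulVec, one_mulVec, dotProduct_sub,
        dotProduct_add, dotProduct_smul, smul_eq_mul, myquad_vmv]
      nlinarith [hq2, hqa, hs, mul_nonneg hε0.le hqa,
        mul_nonneg (sub_nonneg.2 hhigh) hs,
        mul_nonneg (mul_nonneg hε0.le (sub_nonneg.2 hle)) hs]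
  refine ⟨part1, part2, fun v => ?_⟩
  have hAq : (0:ℝ) ≤ v ⬝ᵥ A⁻¹ *ᵥ v := myquad_nonneg hA.inv.posSemidef v
  have hBq : (0:ℝ) ≤ v ⬝ᵥ B⁻¹ *ᵥ v := myquad_nonneg hB.inv.posSemidef v
  have hc1 : (0:ℝ) < (1 - ε) / 4 := by linarith
  have hub := myinv_quad_le hc1 hA hB part1 v
  have hpsd2 : (A - (1 + ε)⁻¹ • B).PosSemidef := by
    have h := mysmul_psd (le_of_lt (by positivity : (0:ℝ) < (1+ε)⁻¹)) part2
    have heq : (1 + ε)⁻¹ • ((1 + ε) • A - B) = A - (1 + ε)⁻¹ • B := by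
      rw [smul_sub, smul_smul, inv_mul_cancel₀ (by positivity : (1:ℝ) + ε ≠ 0), one_smul]
    rwa [heq] at h
  have hc2 : (0:ℝ) < (1 + ε)⁻¹ := by positivity
  have hlb := myinv_quad_le hc2 hB hA hpsd2 v
  rw [inv_inv] at hlb
  constructor
  · -- (1/2) * vA⁻¹v ≤ vB⁻¹v
    nlinarith [hlb, hBq, mul_nonneg (by linarith : (0:ℝ) ≤ 1 - ε) hBq]
  · -- vB⁻¹v ≤ 8 vA⁻¹v
    have h8 : ((1 - ε) / 4)⁻¹ ≤ 8 := by
      rw [inv_div, div_le_iff₀ h1ε]; linarith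
    calc v ⬝ᵥ B⁻¹ *ᵥ v ≤ ((1 - ε) / 4)⁻¹ * (v ⬝ᵥ A⁻¹ *ᵥ v) := hub
      _ ≤ 8 * (v ⬝ᵥ A⁻¹ *ᵥ v) := mul_le_mul_of_nonneg_right h8 hAq
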